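/- Fix q ∈ (−1,1]. For every symmetric f ∈ L²(ℝ₊²), one has ⟨f ⊗_q^1 f, f ⊗_q^1 f⟩_q = (1+q)⁵ ‖f⌢₁f‖²_{L²(ℝ₊²)}, where ⟨·,·⟩_q is the q-inner product on L²(ℝ₊²). -/

import Mathlib

open MeasureTheory

noncomputable section

/-- Lebesgue measure restricted to `ℝ₊ = [0,∞)`. -/
def mR : Measure ℝ := volume.restrict (Set.Ici (0 : ℝ))

/-- Lebesgue measure on `ℝ₊ⁿ`. -/
def μn (n : ℕ) : Measure (Fin n → ℝ) := Measure.pi fun _ => mR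

/-- Number of inversions of a map `σ : Fin p → Fin m`:
`inv(σ) = Card {i < j : σ i > σ j}`. -/
def invCount {p m : ℕ} (σ : Fin p → Fin m) : ℕ :=
  (Finset.univ.filter fun ij : Fin p × Fin p => ij.1 < ij.2 ∧ σ ij.2 < σ ij.1).card

/-- The `q`-inner product
`⟨f,g⟩_q = Σ_{σ ∈ S_n} q^{inv σ} ∫ f(t_{σ(1)},…,t_{σ(n)}) g(t₁,…,t_n) dt`. -/
def qInner (n : ℕ) (q : ℝ) (f g : (Fin n → ℝ) → ℝ) : ℝ :=
  ∑ σ : Equiv.Perm (Fin n),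
    q ^ invCount (fun i => σ i) * ∫ t, f (fun i => t (σ i)) * g t ∂ μn n

/-- `f*`, the mirror of `f` : `f*(t₁,…,tₙ) = f(tₙ,…,t₁)`. -/
def mirror {n : ℕ} (f : (Fin n → ℝ) → ℝ) : (Fin n → ℝ) → ℝ := fun t => f fun i => t i.rev

/-- The pairing integral `∫_{P₂(σ)} F ⊗ H` associated with the pairing
`P₂(σ) = {{N+1-i, N+σ(i)} : 1 ≤ i ≤ N}` of `{1,…,2N}`, namely
`∫ F(s₁,…,s_N) H(s_{N+1-σ⁻¹(1)},…,s_{N+1-σ⁻¹(N)}) ds`. -/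
def P2Integral (N : ℕ) (σ : Equiv.Perm (Fin N)) (F H : (Fin N → ℝ) → ℝ) : ℝ :=
  ∫ s, F s * H (fun i => s (σ.symm i).rev) ∂ μn N

/-- `f` is symmetric: for every permutation `σ`, `f(t_{σ(1)},…,t_{σ(n)}) = f(t₁,…,tₙ)`
for almost every `t`. -/
def SymmFn {n : ℕ} (f : (Fin n → ℝ) → ℝ) : Prop :=
  ∀ σ : Equiv.Perm (Fin n), ∀ᵐ t ∂ μn n, f (fun i => t (σ i)) = f t

/-- Safe coordinate access: `gv t k = t k` when `k < m`, and `0` otherwise. -/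
def gv {m : ℕ} (t : Fin m → ℝ) (k : ℕ) : ℝ := if h : k < m then t ⟨k, h⟩ else 0

/-- The `p`-th contraction `f ⌢_p g`:
`(f ⌢_p g)(t₁,…,t_{n+m-2p}) = ∫ f(t₁,…,t_{n-p},s_p,…,s₁) g(s₁,…,s_p,t_{n-p+1},…,t_{n+m-2p}) ds`. -/
def contr (n m p : ℕ) (f : (Fin n → ℝ) → ℝ) (g : (Fin m → ℝ) → ℝ) :
    (Fin (n + m - 2 * p) → ℝ) → ℝ :=
  fun t => ∫ s : Fin p → ℝ,
      f (fun i => if (i : ℕ) < n - p then gv t i else gv s (n - 1 - (i : ℕ))) *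
      g (fun j => if (j : ℕ) < p then gv s j else gv t (n - p + ((j : ℕ) - p))) ∂ μn p

/-- `α(σ)` for a (strictly decreasing, 0-indexed) `σ : Fin p → Fin n`;
in 1-indexed terms `α(σ) = Σᵢ (n+1-σ(i)) - p(p+1)/2`. -/
def alphaA (n p : ℕ) (σ : Fin p → Fin n) : ℕ := (∑ i, (n - (σ i : ℕ))) - p * (p + 1) / 2

/-- `β(σ)` for an (injective, 0-indexed) `σ : Fin p → Fin n`;
in 1-indexed terms `β(σ) = Σᵢ σ(i) - p(p+1)/2 + inv(σ)`. -/
def betaB (n p : ℕ) (σ : Fin p → Fin n) : ℕ :=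
  ((∑ i, (σ i : ℕ)) - p * (p - 1) / 2) + invCount σ

/-- `f_q^{(p)}`, as a function of `(t₁,…,t_{n-p},s_p,…,s₁)`:
`Σ_{σ : {1,…,p} → {1,…,n} strictly decreasing} q^{α(σ)} f(x₁,…,xₙ)` where `x_{σ(i)} = s_i`
and the remaining coordinates, read increasingly, are `t₁,…,t_{n-p}`. -/
def qexpDec (n p : ℕ) (q : ℝ) (f : (Fin n → ℝ) → ℝ) : (Fin n → ℝ) → ℝ :=
  fun u => ∑ σ ∈ Finset.univ.filter (fun σ : Fin p → Fin n => ∀ i j : Fin p, i < j → σ j < σ i),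
    q ^ alphaA n p σ * f (fun j =>
      if ∃ i, σ i = j then
        ∑ i ∈ Finset.univ.filter (fun i => σ i = j), gv u (n - 1 - (i : ℕ))
      else gv u ((Finset.univ.filter fun j' : Fin n => j' < j ∧ ∀ i, σ i ≠ j').card))

/-- `f_q^{[p]}`, as a function of `(s₁,…,s_p,t₁,…,t_{n-p})`:
`Σ_{σ : {1,…,p} → {1,…,n} injective} q^{β(σ)} f(x₁,…,xₙ)` where `x_{σ(i)} = s_i`
and the remaining coordinates, read increasingly, are `t₁,…,t_{n-p}`. -/
def qexpInj (n p : ℕ) (q : ℝ) (f : (Fin n → ℝ) → ℝ) : (Fin n → ℝ) → ℝ :=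
  fun u => ∑ σ ∈ Finset.univ.filter (fun σ : Fin p → Fin n => Function.Injective σ),
    q ^ betaB n p σ * f (fun j =>
      if ∃ i, σ i = j then
        ∑ i ∈ Finset.univ.filter (fun i => σ i = j), gv u (i : ℕ)
      else gv u (p + (Finset.univ.filter fun j' : Fin n => j' < j ∧ ∀ i, σ i ≠ j').card))

/-- The `q`-contraction `f ⊗_q^p g := f_q^{(p)} ⌢_p g_q^{[p]}`. -/
def qcontr (n m p : ℕ) (q : ℝ) (f : (Fin n → ℝ) → ℝ) (g : (Fin m → ℝ) → ℝ) :
    (Fin (n + m - 2 * p) → ℝ) → ℝ :=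
  contr n m p (qexpDec n p q f) (qexpInj m p q g)

/-- Two (2-element) sets form a crossing: `{x₁,y₁}, {x₂,y₂}` with `x₁ < x₂ < y₁ < y₂`. -/
def Crossing (p₁ p₂ : Finset ℕ) : Prop :=
  ∃ x₁ ∈ p₁, ∃ y₁ ∈ p₁, ∃ x₂ ∈ p₂, ∃ y₂ ∈ p₂, x₁ < x₂ ∧ x₂ < y₁ ∧ y₁ < y₂

/-- The number of crossings `Cr(π)` of a pairing `π` (each crossing counted once:
the pair containing the smallest point is listed first). -/
def crNum (π : Finset (Finset ℕ)) : ℕ := by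
  classical exact ((π ×ˢ π).filter fun pp => Crossing pp.1 pp.2).card

/-- `π` is a pairing of `{0,…,N-1}`: a partition of it into 2-element sets. -/
def IsPairingOn (N : ℕ) (π : Finset (Finset ℕ)) : Prop :=
  (∀ pr ∈ π, pr.card = 2 ∧ pr ⊆ Finset.range N) ∧ ∀ x < N, ∃! pr, pr ∈ π ∧ x ∈ pr

/-- `off n i = n₁ + … + nᵢ`, the offset of the `(i+1)`-th block. -/
def off (n : ℕ → ℕ) (i : ℕ) : ℕ := ∑ j ∈ Finset.range i, n j

/-- `π ∈ C₂(n₁ ⊗ … ⊗ n_r)`: `π` is a pairing of the ground set partitioned into the `r`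
consecutive blocks of sizes `n 0, …, n (r-1)`, and every pair of `π` meets two distinct
blocks (no pair is contained in a single block). -/
def Respects (r : ℕ) (n : ℕ → ℕ) (π : Finset (Finset ℕ)) : Prop :=
  IsPairingOn (off n r) π ∧
    ∀ pr ∈ π, ¬ ∃ i < r, ∀ x ∈ pr, off n i ≤ x ∧ x < off n (i + 1)

/-- The (finite) set `C₂(n₁ ⊗ … ⊗ n_r)` of all respecting pairings. -/
def respPairings (r : ℕ) (n : ℕ → ℕ) : Finset (Finset (Finset ℕ)) := by
  classical exact ((Finset.range (off n r)).powerset.powerset).filter fun π => Respects r n π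

/-- The pairing integral `∫_π F`: one integration variable per pair of `π`, the two
coordinates of each pair being set equal to that variable, integrated over `ℝ₊^{N/2}`. -/
def pairingIntegral (π : Finset (Finset ℕ)) (F : (ℕ → ℝ) → ℝ) : ℝ :=
  ∫ u : {pr // pr ∈ π} → ℝ,
    F (fun x => ∑ pr ∈ Finset.univ.filter (fun pr : {pr // pr ∈ π} => x ∈ pr.1), u pr)
    ∂ Measure.pi fun _ => mR

/-- The product `f₁(t₁,…,t_{n₁}) f₂(t_{n₁+1},…,t_{n₁+n₂}) ⋯ f_r(…,t_n)` as a function of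
`t : ℕ → ℝ` (blocks of sizes `n 0, …, n (r-1)`). -/
def prodBlocks (r : ℕ) (n : ℕ → ℕ) (f : ∀ i, (Fin (n i) → ℝ) → ℝ) : (ℕ → ℝ) → ℝ :=
  fun t => ∏ i ∈ Finset.range r, f i (fun j => t (off n i + (j : ℕ)))

/-- `P₂(σ) = {{n+1-i, n+σ(i)} : 1 ≤ i ≤ n}` as a pairing of `{0,…,2n-1}` (0-indexed). -/
def P2set (n : ℕ) (σ : Equiv.Perm (Fin n)) : Finset (Finset ℕ) :=
  Finset.univ.image fun i : Fin n => ({n - 1 - (i : ℕ), n + ((σ i : Fin n) : ℕ)} : Finset ℕ)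

/-- The map `φ` in the construction of `F(σ₁,σ₂,π')`: the unpaired points of the first two
blocks are mapped increasingly onto `{0,…,n₀+n₁-2p-1}` and every later point `x` is mapped
to `x - 2p`. -/
def phiF (n₀ n₁ p : ℕ) (σ₁ : Fin p → Fin n₀) (σ₂ : Fin p → Fin n₁) (x : ℕ) : ℕ :=
  if x < n₀ + n₁ then
    ((Finset.range x).filter fun y =>
      (∀ i, ((σ₁ i : ℕ)) ≠ y) ∧ (∀ i, n₀ + (σ₂ i : ℕ) ≠ y)).card
  else x - 2 * p

/-- The pairing `F(σ₁,σ₂,π')` of the ground set `{0,…,N-1}`: it contains the `p` pairs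
`{σ₁(i), n₀+σ₂(i)}`, and its remaining pairs are exactly the `φ`-preimages of the pairs
of `π'`. -/
def Fpair (N n₀ n₁ p : ℕ) (σ₁ : Fin p → Fin n₀) (σ₂ : Fin p → Fin n₁)
    (π' : Finset (Finset ℕ)) : Finset (Finset ℕ) :=
  (Finset.univ.image fun i : Fin p => ({(σ₁ i : ℕ), n₀ + (σ₂ i : ℕ)} : Finset ℕ)) ∪
  π'.image fun pr => (Finset.range N).filter fun x =>
    (x < n₀ + n₁ → (∀ i, (σ₁ i : ℕ) ≠ x) ∧ (∀ i, n₀ + (σ₂ i : ℕ) ≠ x)) ∧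
    phiF n₀ n₁ p σ₁ σ₂ x ∈ pr

/-- Block sizes `(n₁+n₂-2p, n₃, …, n_r)` after contracting the first two blocks. -/
def contractedSizes (n : ℕ → ℕ) (p : ℕ) : ℕ → ℕ
  | 0 => n 0 + n 1 - 2 * p
  | k + 1 => n (k + 2)

/-- Kernels `(f₁ ⊗_q^p f₂, f₃, …, f_r)` after contracting the first two kernels. -/
def contractedKernels (n : ℕ → ℕ) (p : ℕ) (q : ℝ) (f : ∀ i, (Fin (n i) → ℝ) → ℝ) :
    ∀ j, (Fin (contractedSizes n p j) → ℝ) → ℝ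
  | 0 => qcontr (n 0) (n 1) p q (f 0) (f 1)
  | k + 1 => f (k + 2)

end
set_option linter.unusedVariables false
set_option linter.unreachableTactic false
set_option linter.unusedTactic false
set_option linter.unnecessarySeqFocus false
set_option maxHeartbeats 1000000

section Stmt16Aux
open MeasureTheory

instance : SigmaFinite mR := by unfold mR; infer_instance

lemma fin2_eta (t : Fin 2 → ℝ) : (![t 0, t 1] : Fin 2 → ℝ) = t := by
  funext i; fin_cases i <;> simp

lemma mp2 : MeasurePreserving (MeasurableEquiv.finTwoArrow : (Fin 2 → ℝ) ≃ᵐ ℝ × ℝ)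
    (μn 2) (mR.prod mR) := measurePreserving_finTwoArrow mR

lemma mp1 : MeasurePreserving (MeasurableEquiv.funUnique (Fin 1) ℝ) (μn 1) mR :=
  measurePreserving_funUnique mR (Fin 1)

lemma integral_mun2 (φ : ℝ × ℝ → ℝ) :
    ∫ t, φ (t 0, t 1) ∂ μn 2 = ∫ z, φ z ∂ (mR.prod mR) :=
  mp2.integral_comp MeasurableEquiv.finTwoArrow.measurableEmbedding φ

lemma integral_mun1 (ψ : ℝ → ℝ) : ∫ s, ψ (s 0) ∂ μn 1 = ∫ x, ψ x ∂ mR := by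
  rw [← mp1.integral_comp (MeasurableEquiv.funUnique (Fin 1) ℝ).measurableEmbedding ψ]
  rfl

lemma perm2_univ : (Finset.univ : Finset (Equiv.Perm (Fin 2))) = {1, Equiv.swap 0 1} := by
  decide

lemma inv_one2 : invCount (fun i => (1 : Equiv.Perm (Fin 2)) i) = 0 := by decide

lemma inv_swap2 : invCount (fun i => (Equiv.swap 0 1 : Equiv.Perm (Fin 2)) i) = 1 := by decide

lemma contr_two (f g : (Fin 2 → ℝ) → ℝ) (t : Fin 2 → ℝ) :
    contr 2 2 1 f g t = ∫ s : Fin 1 → ℝ, f ![t 0, s 0] * g ![s 0, t 1] ∂ μn 1 := by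
  unfold contr
  congr 1; funext s; congr 1
  · congr 1; funext i; fin_cases i <;> simp [gv]
  · congr 1; funext j; fin_cases j <;> simp [gv]

lemma qexpDec_two (q : ℝ) (f : (Fin 2 → ℝ) → ℝ) (u : Fin 2 → ℝ) :
    qexpDec 2 1 q f u = f ![u 0, u 1] + q * f ![u 1, u 0] := by
  unfold qexpDec
  rw [show (Finset.univ.filter (fun σ : Fin 1 → Fin 2 => ∀ i j : Fin 1, i < j → σ j < σ i))
      = {fun _ => 0, fun _ => 1} from by decide]
  rw [Finset.sum_insert (by decide), Finset.sum_singleton, add_comm]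
  congr 1
  · rw [show alphaA 2 1 (fun _ : Fin 1 => (1:Fin 2)) = 0 from by decide, pow_zero, one_mul]
    refine congrArg f ?_
    funext j; fin_cases j <;>
      simp (config := { decide := true }) [gv] <;>
      exact congrArg u (Fin.ext (by decide))
  · rw [show alphaA 2 1 (fun _ : Fin 1 => (0:Fin 2)) = 1 from by decide, pow_one]
    refine congrArg (fun x => q * f x) ?_
    funext j; fin_cases j <;>
      simp (config := { decide := true }) [gv] <;>
      exact congrArg u (Fin.ext (by decide))

lemma qexpInj_two (q : ℝ) (f : (Fin 2 → ℝ) → ℝ) (u : Fin 2 → ℝ) :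
    qexpInj 2 1 q f u = f ![u 0, u 1] + q * f ![u 1, u 0] := by
  unfold qexpInj
  rw [show (Finset.univ.filter (fun σ : Fin 1 → Fin 2 => Function.Injective σ))
      = {fun _ => 0, fun _ => 1} from by decide]
  rw [Finset.sum_insert (by decide), Finset.sum_singleton]
  congr 1
  · rw [show betaB 2 1 (fun _ : Fin 1 => (0:Fin 2)) = 0 from by decide, pow_zero, one_mul]
    refine congrArg f ?_
    funext j; fin_cases j <;>
      simp (config := { decide := true }) [gv] <;>
      exact congrArg u (Fin.ext (by decide))
  · rw [show betaB 2 1 (fun _ : Fin 1 => (1:Fin 2)) = 1 from by decide, pow_one]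
    refine congrArg (fun x => q * f x) ?_
    funext j; fin_cases j <;>
      simp (config := { decide := true }) [gv] <;>
      exact congrArg u (Fin.ext (by decide))

end Stmt16Aux
open MeasureTheory ENNReal NNReal in
/-- For `q ∈ (-1,1]` and symmetric `f ∈ L²(ℝ₊²)`:
`⟨f ⊗_q^1 f, f ⊗_q^1 f⟩_q = (1+q)⁵ ‖f ⌢₁ f‖²_{L²(ℝ₊²)}`. -/
theorem stmt16 (q : ℝ) (hq₁ : -1 < q) (hq₂ : q ≤ 1)
    (f : (Fin 2 → ℝ) → ℝ) (hf : MemLp f 2 (μn 2)) (hsym : SymmFn f) :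
    qInner (2 + 2 - 2 * 1) q (qcontr 2 2 1 q f f) (qcontr 2 2 1 q f f) =
      (1 + q) ^ 5 * (eLpNorm (contr 2 2 1 f f) 2 (μn (2 + 2 - 2 * 1))).toReal ^ 2 := by
  classical
  show qInner 2 q (qcontr 2 2 1 q f f) (qcontr 2 2 1 q f f) =
      (1 + q) ^ 5 * (eLpNorm (contr 2 2 1 f f) 2 (μn 2)).toReal ^ 2
  set F : ℝ × ℝ → ℝ := fun z => f ![z.1, z.2] with hFdef
  have hfF : ∀ t : Fin 2 → ℝ, F (t 0, t 1) = f t := fun t => congrArg f (fin2_eta t)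
  have hFm : AEStronglyMeasurable F (mR.prod mR) := by
    rw [← mp2.map_eq,
      MeasurableEquiv.finTwoArrow.measurableEmbedding.aestronglyMeasurable_map_iff]
    exact hf.aestronglyMeasurable.congr (Filter.Eventually.of_forall fun t => (hfF t).symm)
  have heF : eLpNorm f 2 (μn 2) = eLpNorm F 2 (mR.prod mR) := by
    rw [← eLpNorm_comp_measurePreserving hFm mp2]
    exact eLpNorm_congr_ae (Filter.Eventually.of_forall fun t => (hfF t).symm)
  have hsymF : ∀ᵐ z ∂(mR.prod mR), F (z.2, z.1) = F z := by
    rw [← mp2.map_eq, MeasurableEquiv.finTwoArrow.measurableEmbedding.ae_map_iff]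
    filter_upwards [hsym (Equiv.swap 0 1)] with t ht
    have harg : (fun i => t ((Equiv.swap 0 1 : Equiv.Perm (Fin 2)) i)) = ![t 1, t 0] := by
      funext i; fin_cases i <;> simp
    show F (t 1, t 0) = F (t 0, t 1)
    calc F (t 1, t 0) = f ![t 1, t 0] := rfl
      _ = f t := by rw [← harg]; exact ht
      _ = F (t 0, t 1) := (hfF t).symm
  obtain ⟨F', hF'sm, hFF'⟩ : ∃ F', StronglyMeasurable F' ∧ F =ᵐ[(mR.prod mR)] F' :=
    ⟨hFm.mk F, hFm.stronglyMeasurable_mk, hFm.ae_eq_mk⟩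
  have hmF' : Measurable F' := hF'sm.measurable
  set H : ℝ × ℝ → ℝ := fun z => ∫ x, F' (z.1, x) * F' (x, z.2) ∂ mR with hHdef
  set Qp : ℝ × ℝ → ℝ :=
    fun z => ∫ x, (F (z.1, x) + q * F (x, z.1)) * (F (x, z.2) + q * F (z.2, x)) ∂ mR with hQdef
  set Cp : ℝ × ℝ → ℝ := fun z => ∫ x, F (z.1, x) * F (x, z.2) ∂ mR with hCdef
  -- pointwise descriptions
  have hqc_pt : ∀ t : Fin 2 → ℝ, qcontr 2 2 1 q f f t = Qp (t 0, t 1) := by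
    intro t
    show contr 2 2 1 (qexpDec 2 1 q f) (qexpInj 2 1 q f) t = Qp (t 0, t 1)
    rw [contr_two]
    rw [show (fun s : Fin 1 → ℝ => qexpDec 2 1 q f ![t 0, s 0] * qexpInj 2 1 q f ![s 0, t 1])
        = fun s => (fun x => (F (t 0, x) + q * F (x, t 0)) * (F (x, t 1) + q * F (t 1, x))) (s 0)
        from funext fun s => by
          rw [qexpDec_two, qexpInj_two]
          simp only [Matrix.cons_val_zero, Matrix.cons_val_one, Matrix.head_cons]; rfl]
    rw [integral_mun1 (fun x => (F (t 0, x) + q * F (x, t 0)) * (F (x, t 1) + q * F (t 1, x))), hQdef]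
  have hcp_pt : ∀ t : Fin 2 → ℝ, contr 2 2 1 f f t = Cp (t 0, t 1) := by
    intro t
    rw [contr_two]
    rw [show (fun s : Fin 1 → ℝ => f ![t 0, s 0] * f ![s 0, t 1])
        = fun s => (fun x => F (t 0, x) * F (x, t 1)) (s 0) from rfl]
    rw [integral_mun1 (fun x => F (t 0, x) * F (x, t 1)), hCdef]
  -- a.e. tools
  have aefst : ∀ {P : ℝ → Prop}, (∀ᵐ a ∂ mR, P a) → ∀ᵐ z ∂(mR.prod mR), P z.1 := fun h =>
    Measure.quasiMeasurePreserving_fst.ae h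
  have aesnd : ∀ {P : ℝ → Prop}, (∀ᵐ a ∂ mR, P a) → ∀ᵐ z ∂(mR.prod mR), P z.2 := fun h =>
    Measure.quasiMeasurePreserving_snd.ae h
  have aeswap : ∀ {P : ℝ × ℝ → Prop}, (∀ᵐ z ∂(mR.prod mR), P z) → ∀ᵐ z ∂(mR.prod mR), P (z.2, z.1) := fun h =>
    Measure.measurePreserving_swap.quasiMeasurePreserving.ae h
  have hP : ∀ᵐ z ∂(mR.prod mR), (F z = F' z ∧ F (z.2, z.1) = F z) := hFF'.and hsymF
  have hGood : ∀ᵐ a ∂ mR, ((∀ᵐ x ∂ mR, F (a, x) = F' (a, x) ∧ F (x, a) = F (a, x)) ∧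
      (∀ᵐ x ∂ mR, F (x, a) = F' (x, a) ∧ F (a, x) = F (x, a))) := by
    have h1 := Measure.ae_ae_of_ae_prod hP
    have h2 := Measure.ae_ae_of_ae_prod (aeswap hP)
    exact h1.and h2
  have hGoodz := (aefst hGood).and (aesnd hGood)
  have hQH : ∀ᵐ z ∂(mR.prod mR), Qp z = (1 + q) ^ 2 * H z := by
    filter_upwards [hGoodz] with z hz
    rw [hQdef, hHdef]
    show (∫ x, (F (z.1, x) + q * F (x, z.1)) * (F (x, z.2) + q * F (z.2, x)) ∂ mR)
        = (1 + q) ^ 2 * ∫ x, F' (z.1, x) * F' (x, z.2) ∂ mR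
    rw [← integral_const_mul]
    apply integral_congr_ae
    filter_upwards [hz.1.1, hz.2.2] with x hx1 hx2
    rw [hx1.2, hx2.2, hx1.1, hx2.1]; ring
  have hCH : ∀ᵐ z ∂(mR.prod mR), Cp z = H z := by
    filter_upwards [hGoodz] with z hz
    apply integral_congr_ae
    filter_upwards [hz.1.1, hz.2.2] with x hx1 hx2
    rw [hx1.1, hx2.1]
  have hHsymm : ∀ᵐ z ∂(mR.prod mR), H (z.2, z.1) = H z := by
    filter_upwards [hGoodz] with z hz
    show (∫ x, F' (z.2, x) * F' (x, z.1) ∂ mR) = ∫ x, F' (z.1, x) * F' (x, z.2) ∂ mR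
    apply integral_congr_ae
    filter_upwards [hz.1.1, hz.1.2, hz.2.1, hz.2.2] with x h1 h2 h3 h4
    calc F' (z.2, x) * F' (x, z.1) = F (z.2, x) * F (x, z.1) := by rw [h3.1, h2.1]
      _ = F (x, z.2) * F (z.1, x) := by rw [← h4.2, ← h1.2]
      _ = F' (z.1, x) * F' (x, z.2) := by rw [h1.1, h4.1]; ring
  -- strong measurability of H
  have hHm : StronglyMeasurable H := by
    rw [hHdef]
    have hm : Measurable fun p : (ℝ × ℝ) × ℝ => F' (p.1.1, p.2) * F' (p.2, p.1.2) := by fun_prop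
    exact hm.stronglyMeasurable.integral_prod_right'
  have hconv : ∀ x : ℝ≥0∞, x ^ ((2:ℝ≥0∞).toReal) = x ^ (2:ℕ) := fun x => by
    rw [show ((2:ℝ≥0∞).toReal) = ((2:ℕ):ℝ) from by simp, ENNReal.rpow_natCast]
  have hconv2 : ∀ x : ℝ≥0∞, x ^ (2:ℝ) = x ^ (2:ℕ) := fun x => by
    rw [show (2:ℝ) = ((2:ℕ):ℝ) from by norm_num, ENNReal.rpow_natCast]
  have hFsqfin : ∫⁻ z, (‖F' z‖₊ : ℝ≥0∞) ^ (2:ℕ) ∂(mR.prod mR) < ⊤ := by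
    have h1 : eLpNorm F' 2 (mR.prod mR) < ⊤ := by
      rw [← eLpNorm_congr_ae hFF', ← heF]; exact hf.2
    rw [eLpNorm_lt_top_iff_lintegral_rpow_enorm_lt_top two_ne_zero ENNReal.ofNat_ne_top] at h1
    simpa only [hconv, enorm_eq_nnnorm] using h1
  have hconj : Real.HolderConjugate 2 2 := Real.HolderConjugate.two_two
  set A : ℝ → ℝ≥0∞ := fun a => ∫⁻ x, (‖F' (a, x)‖₊ : ℝ≥0∞) ^ (2:ℕ) ∂ mR with hAdef
  set B : ℝ → ℝ≥0∞ := fun b => ∫⁻ x, (‖F' (x, b)‖₊ : ℝ≥0∞) ^ (2:ℕ) ∂ mR with hBdef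
  have hCS : ∀ z : ℝ × ℝ, (‖H z‖₊ : ℝ≥0∞) ^ (2:ℕ) ≤ A z.1 * B z.2 := by
    intro z
    have h1 : (‖H z‖₊ : ℝ≥0∞) ≤ ∫⁻ x, (‖F' (z.1, x)‖₊ : ℝ≥0∞) * (‖F' (x, z.2)‖₊ : ℝ≥0∞) ∂ mR := by
      refine le_trans (enorm_integral_le_lintegral_enorm _)
        (le_of_eq (lintegral_congr fun x => ?_))
      exact enorm_mul _ _
    have h2 := ENNReal.lintegral_mul_le_Lp_mul_Lq mR hconj
        (f := fun x => (‖F' (z.1, x)‖₊ : ℝ≥0∞)) (g := fun x => (‖F' (x, z.2)‖₊ : ℝ≥0∞))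
        (by fun_prop) (by fun_prop)
    have h3 : (‖H z‖₊ : ℝ≥0∞) ≤ A z.1 ^ (1/2 : ℝ) * B z.2 ^ (1/2 : ℝ) := by
      refine le_trans h1 (le_trans h2 (le_of_eq ?_))
      rw [hAdef, hBdef]
      congr 1
      · congr 1; exact lintegral_congr fun x => hconv2 _
      · congr 1; exact lintegral_congr fun x => hconv2 _
    calc (‖H z‖₊ : ℝ≥0∞) ^ (2:ℕ) ≤ (A z.1 ^ (1/2:ℝ) * B z.2 ^ (1/2:ℝ)) ^ (2:ℕ) := by
          rw [pow_two, pow_two]; exact mul_le_mul' h3 h3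
      _ = A z.1 * B z.2 := by
          rw [mul_pow, ← hconv2, ← hconv2, ← ENNReal.rpow_mul, ← ENNReal.rpow_mul]
          norm_num
  have hAm : Measurable A := by
    rw [hAdef]
    exact Measurable.lintegral_prod_right'
      (f := fun p : ℝ × ℝ => (‖F' (p.1, p.2)‖₊ : ℝ≥0∞) ^ (2:ℕ)) (by fun_prop)
  have hBm : Measurable B := by
    rw [hBdef]
    exact Measurable.lintegral_prod_right'
      (f := fun p : ℝ × ℝ => (‖F' (p.2, p.1)‖₊ : ℝ≥0∞) ^ (2:ℕ)) (by fun_prop)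
  have hHsqfin : ∫⁻ z, (‖H z‖₊ : ℝ≥0∞) ^ (2:ℕ) ∂(mR.prod mR) < ⊤ := by
    calc ∫⁻ z, (‖H z‖₊ : ℝ≥0∞) ^ (2:ℕ) ∂(mR.prod mR) ≤ ∫⁻ z, A z.1 * B z.2 ∂(mR.prod mR) := lintegral_mono hCS
      _ = (∫⁻ a, A a ∂ mR) * (∫⁻ b, B b ∂ mR) :=
          lintegral_prod_mul hAm.aemeasurable hBm.aemeasurable
      _ < ⊤ := by
          have hA' : (∫⁻ a, A a ∂ mR) = ∫⁻ z, (‖F' z‖₊ : ℝ≥0∞) ^ (2:ℕ) ∂(mR.prod mR) := by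
            rw [hAdef]
            exact (lintegral_prod (fun z : ℝ × ℝ => (‖F' z‖₊ : ℝ≥0∞) ^ (2:ℕ)) (by fun_prop)).symm
          have hB' : (∫⁻ b, B b ∂ mR) = ∫⁻ z, (‖F' z‖₊ : ℝ≥0∞) ^ (2:ℕ) ∂(mR.prod mR) := by
            rw [hBdef]
            exact (lintegral_prod_symm (fun z : ℝ × ℝ => (‖F' z‖₊ : ℝ≥0∞) ^ (2:ℕ)) (by fun_prop)).symm
          rw [hA', hB']
          exact ENNReal.mul_lt_top hFsqfin hFsqfin
  have hHL2 : MemLp H 2 (mR.prod mR) := by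
    refine ⟨hHm.aestronglyMeasurable, ?_⟩
    rw [eLpNorm_lt_top_iff_lintegral_rpow_enorm_lt_top two_ne_zero ENNReal.ofNat_ne_top]
    simpa only [hconv, enorm_eq_nnnorm] using hHsqfin
  -- assembly
  have hswapargs : ∀ t : Fin 2 → ℝ,
      (fun i => t ((Equiv.swap 0 1 : Equiv.Perm (Fin 2)) i)) = ![t 1, t 0] := by
    intro t; funext i; fin_cases i <;> simp
  have hid : (∫ t, qcontr 2 2 1 q f f (fun i => t ((1 : Equiv.Perm (Fin 2)) i)) *
      qcontr 2 2 1 q f f t ∂ μn 2) = (1+q)^4 * ∫ z, H z * H z ∂(mR.prod mR) := by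
    have hpt : ∀ t : Fin 2 → ℝ, qcontr 2 2 1 q f f (fun i => t ((1 : Equiv.Perm (Fin 2)) i)) *
        qcontr 2 2 1 q f f t = (fun z => Qp z * Qp z) (t 0, t 1) := by
      intro t
      have h1 : (fun i => t ((1 : Equiv.Perm (Fin 2)) i)) = t := rfl
      rw [h1, hqc_pt]
    calc (∫ t, qcontr 2 2 1 q f f (fun i => t ((1 : Equiv.Perm (Fin 2)) i)) *
          qcontr 2 2 1 q f f t ∂ μn 2)
        = ∫ t, (fun z => Qp z * Qp z) (t 0, t 1) ∂ μn 2 :=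
          integral_congr_ae (Filter.Eventually.of_forall hpt)
      _ = ∫ z, Qp z * Qp z ∂(mR.prod mR) := integral_mun2 (fun z => Qp z * Qp z)
      _ = (1+q)^4 * ∫ z, H z * H z ∂(mR.prod mR) := by
          rw [← integral_const_mul]
          apply integral_congr_ae
          filter_upwards [hQH] with z hz
          rw [hz]; ring
  have hsw : (∫ t, qcontr 2 2 1 q f f (fun i => t ((Equiv.swap 0 1 : Equiv.Perm (Fin 2)) i)) *
      qcontr 2 2 1 q f f t ∂ μn 2) = (1+q)^4 * ∫ z, H z * H z ∂(mR.prod mR) := by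
    have hpt : ∀ t : Fin 2 → ℝ,
        qcontr 2 2 1 q f f (fun i => t ((Equiv.swap 0 1 : Equiv.Perm (Fin 2)) i)) *
        qcontr 2 2 1 q f f t = (fun z => Qp (z.2, z.1) * Qp z) (t 0, t 1) := by
      intro t
      rw [hswapargs t, hqc_pt, hqc_pt]
      simp
    calc (∫ t, qcontr 2 2 1 q f f (fun i => t ((Equiv.swap 0 1 : Equiv.Perm (Fin 2)) i)) *
          qcontr 2 2 1 q f f t ∂ μn 2)
        = ∫ t, (fun z => Qp (z.2, z.1) * Qp z) (t 0, t 1) ∂ μn 2 :=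
          integral_congr_ae (Filter.Eventually.of_forall hpt)
      _ = ∫ z, Qp (z.2, z.1) * Qp z ∂(mR.prod mR) := integral_mun2 (fun z => Qp (z.2, z.1) * Qp z)
      _ = (1+q)^4 * ∫ z, H z * H z ∂(mR.prod mR) := by
          rw [← integral_const_mul]
          apply integral_congr_ae
          filter_upwards [hQH, aeswap hQH, hHsymm] with z h1 h2 h3
          rw [h2, h1, h3]; ring
  have hCm : AEStronglyMeasurable Cp (mR.prod mR) :=
    hHm.aestronglyMeasurable.congr (Filter.EventuallyEq.symm hCH)
  have hRHS : eLpNorm (contr 2 2 1 f f) 2 (μn 2) = eLpNorm H 2 (mR.prod mR) := by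
    calc eLpNorm (contr 2 2 1 f f) 2 (μn 2)
        = eLpNorm (Cp ∘ (MeasurableEquiv.finTwoArrow : (Fin 2 → ℝ) ≃ᵐ ℝ × ℝ)) 2 (μn 2) :=
          eLpNorm_congr_ae (Filter.Eventually.of_forall fun t => hcp_pt t)
      _ = eLpNorm Cp 2 (mR.prod mR) := eLpNorm_comp_measurePreserving hCm mp2
      _ = eLpNorm H 2 (mR.prod mR) := eLpNorm_congr_ae hCH
  have hsqInt : (eLpNorm H 2 (mR.prod mR)).toReal ^ 2 = ∫ z, H z * H z ∂(mR.prod mR) := by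
    rw [hHL2.eLpNorm_eq_integral_rpow_norm two_ne_zero ENNReal.ofNat_ne_top]
    simp only [show ((2:ℝ≥0∞)).toReal = (2:ℝ) from by simp]
    have hnn : 0 ≤ ∫ z, ‖H z‖ ^ (2:ℝ) ∂(mR.prod mR) :=
      integral_nonneg fun z => Real.rpow_nonneg (norm_nonneg _) _
    rw [ENNReal.toReal_ofReal (Real.rpow_nonneg hnn _)]
    rw [← Real.rpow_natCast ((∫ z, ‖H z‖ ^ (2:ℝ) ∂(mR.prod mR)) ^ ((2:ℝ))⁻¹) 2, ← Real.rpow_mul hnn]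
    norm_num
    apply integral_congr_ae
    apply Filter.Eventually.of_forall
    intro z
    exact pow_two (H z)
  unfold qInner
  rw [perm2_univ, Finset.sum_insert (by decide), Finset.sum_singleton]
  simp only [inv_one2, inv_swap2, pow_zero, pow_one, one_mul]
  rw [hid, hsw, hRHS, hsqInt]
  ring
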